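/- Let P ∈ ℝ^{n×n} be symmetric positive definite and let A ∈ ℝ^{n×n} be such that P − AᵀPA is positive definite (discrete-time Lyapunov inequality). Then A is Schur stable: every complex eigenvalue λ of A (viewed as a complex matrix) satisfies |λ| < 1. -/

import Mathlib

open Matrix

lemma quad_pos {n : ℕ} {Q : Matrix (Fin n) (Fin n) ℝ} (hQ : Q.PosDef)
    (x : Fin n → ℂ) (hx : x ≠ 0) :
    0 < (star x ⬝ᵥ (Q.map (Complex.ofReal : ℝ → ℂ)) *ᵥ x).re := by
  have key : (star x ⬝ᵥ (Q.map (Complex.ofReal : ℝ → ℂ)) *ᵥ x).re =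
      (fun i => (x i).re) ⬝ᵥ Q *ᵥ (fun i => (x i).re) +
      (fun i => (x i).im) ⬝ᵥ Q *ᵥ (fun i => (x i).im) := by
    simp only [dotProduct, mulVec, Complex.re_sum, Finset.mul_sum, Finset.sum_add_distrib,
      map_apply, Pi.star_apply, Complex.star_def]
    rw [← Finset.sum_add_distrib]
    congr 1; ext i
    rw [← Finset.sum_add_distrib]
    congr 1; ext j
    simp [Complex.mul_re, Complex.mul_im]
  rw [key]
  by_cases hre : (fun i => (x i).re) = 0
  · have him : (fun i => (x i).im) ≠ 0 := by
      intro h; apply hx; ext i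
      have := congrFun hre i; have := congrFun h i
      simp_all [Complex.ext_iff]
    have h1 := hQ.dotProduct_mulVec_pos him
    have h2 := hQ.posSemidef.dotProduct_mulVec_nonneg (fun i => (x i).re)
    simp only [RCLike.star_def, star_trivial] at h1 h2 ⊢
    · linarith [h1, h2]
  · have h1 := hQ.dotProduct_mulVec_pos hre
    have h2 := hQ.posSemidef.dotProduct_mulVec_nonneg (fun i => (x i).im)
    simp only [star_trivial] at h1 h2 ⊢
    linarith [h1, h2]

theorem stmt7 {n : ℕ} (P A : Matrix (Fin n) (Fin n) ℝ) (hP : P.PosDef)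
    (hLyap : (P - Aᵀ * P * A).PosDef) :
    ∀ lam ∈ spectrum ℂ (A.map (Complex.ofReal : ℝ → ℂ)), ‖lam‖ < 1 := by
  intro lam hlam
  set M := A.map (Complex.ofReal : ℝ → ℂ) with hM
  set Pc := P.map (Complex.ofReal : ℝ → ℂ) with hPc
  -- get an eigenvector
  rw [spectrum.mem_iff] at hlam
  have halg : algebraMap ℂ (Matrix (Fin n) (Fin n) ℂ) lam = lam • 1 := by
    simp [Algebra.algebraMap_eq_smul_one]
  rw [halg] at hlam
  have hdet : (lam • (1 : Matrix (Fin n) (Fin n) ℂ) - M).det = 0 := by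
    by_contra h
    exact hlam ((Matrix.isUnit_iff_isUnit_det _).2 (isUnit_iff_ne_zero.2 h))
  obtain ⟨v, hv0, hv⟩ := (Matrix.exists_mulVec_eq_zero_iff).2 hdet
  have heig : M *ᵥ v = lam • v := by
    have := hv
    rw [sub_mulVec, smul_mulVec, one_mulVec, sub_eq_zero] at this
    exact this.symm
  have hMH : Mᴴ = (A.map (Complex.ofReal : ℝ → ℂ))ᵀ := by
    ext i j
    simp [conjTranspose_apply, map_apply, Complex.conj_ofReal, hM]
  have hmapsub : (P - Aᵀ * P * A).map (Complex.ofReal : ℝ → ℂ)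
      = Pc - Mᵀ * Pc * M := by
    have h1 : (Aᵀ * P * A).map (Complex.ofReal : ℝ → ℂ) = Mᵀ * Pc * M := by
      rw [show (Complex.ofReal : ℝ → ℂ) = (Complex.ofRealHom : ℝ →+* ℂ) from rfl]
      rw [Matrix.map_mul, Matrix.map_mul, Matrix.transpose_map]
      rfl
    rw [Matrix.map_sub _ (fun a b => Complex.ofReal_sub a b), h1]
  have hq1 := quad_pos hP v hv0
  have hq2 := quad_pos hLyap v hv0
  rw [hmapsub] at hq2
  have hquad : star v ⬝ᵥ (Mᵀ * Pc * M) *ᵥ v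
      = (‖lam‖ ^ 2 : ℝ) * (star v ⬝ᵥ Pc *ᵥ v) := by
    rw [← hMH]
    rw [Matrix.mul_assoc, ← Matrix.mulVec_mulVec, Matrix.dotProduct_mulVec,
      ← Matrix.star_mulVec, ← Matrix.mulVec_mulVec, heig]
    rw [star_smul, Matrix.mulVec_smul, smul_dotProduct, dotProduct_smul]
    rw [smul_smul, smul_eq_mul]
    congr 1
    rw [Complex.star_def, mul_comm, Complex.mul_conj, Complex.normSq_eq_norm_sq]
  rw [sub_mulVec, dotProduct_sub, hquad] at hq2
  have hre : ((star v ⬝ᵥ Pc *ᵥ v) - (‖lam‖ ^ 2 : ℝ) * (star v ⬝ᵥ Pc *ᵥ v)).re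
      = (1 - ‖lam‖ ^ 2) * (star v ⬝ᵥ Pc *ᵥ v).re := by
    rw [Complex.sub_re, Complex.re_ofReal_mul]
    ring
  rw [hre] at hq2
  have habs2 : ‖lam‖ ^ 2 < 1 := by
    by_contra h
    push_neg at h
    nlinarith [hq1, hq2]
  nlinarith [norm_nonneg lam, habs2]
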